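/- Under the Slater condition, the Lagrange multiplier of the proximal-point subproblem is uniformly bounded: if x_*^{k+1} is a KKT point of min{F(x) + L_f‖x − x̄^k‖² : g(x) ≤ 0} with multiplier z_*^{k+1} ≥ 0, x_feas satisfies g_i(x_feas) < 0 for all i, dom(h) has diameter D_h, and x* minimizes the original problem, then ‖z_*^{k+1}‖ ≤ (F(x_feas) − F(x*) + L_f D_h²)/min_i(−g_i(x_feas)). -/

import Mathlib

/-- Convex subdifferential of a real-valued function, relative to a set `D`. -/
def subdiffOn {n : ℕ} (D : Set (EuclideanSpace ℝ (Fin n)))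
    (f : EuclideanSpace ℝ (Fin n) → ℝ) (x : EuclideanSpace ℝ (Fin n)) :
    Set (EuclideanSpace ℝ (Fin n)) :=
  {v | ∀ y ∈ D, f x + (inner ℝ v (y - x) : ℝ) ≤ f y}

/-- Gradient inequality for a convex differentiable function. -/
lemma grad_ineq {n : ℕ} {g : EuclideanSpace ℝ (Fin n) → ℝ} {v x : EuclideanSpace ℝ (Fin n)}
    (hc : ConvexOn ℝ Set.univ g) (hg : HasGradientAt g v x) (y : EuclideanSpace ℝ (Fin n)) :
    g x + (inner ℝ v (y - x) : ℝ) ≤ g y := by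
  set c : ℝ → EuclideanSpace ℝ (Fin n) := fun t => x + t • (y - x) with hcdef
  have hder : HasDerivAt (fun t : ℝ => g (c t)) (inner ℝ v (y - x) : ℝ) 0 := by
    have h1 : HasDerivAt c (y - x) 0 := by
      have : HasDerivAt (fun t : ℝ => t • (y - x)) (y - x) 0 := by
        simpa using (hasDerivAt_id (0:ℝ)).smul_const (y - x)
      simpa [hcdef] using this.const_add x
    have h2 : HasFDerivAt g (InnerProductSpace.toDual ℝ _ v) (c 0) := by
      simpa [hcdef] using hg.hasFDerivAt
    have h3 := h2.comp_hasDerivAt 0 h1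
    simp at h3
    exact h3
  have hconv : ConvexOn ℝ Set.univ (fun t : ℝ => g (c t)) := by
    constructor
    · exact convex_univ
    · intro a _ b _ p q hp hq hpq
      have h2 := hc.2 (Set.mem_univ (c a)) (Set.mem_univ (c b)) hp hq hpq
      have h3 : c (p • a + q • b) = p • c a + q • c b := by
        simp only [hcdef, smul_eq_mul]
        match_scalars <;> (ring_nf; try linarith)
      show g (c (p • a + q • b)) ≤ p • g (c a) + q • g (c b)
      rw [h3]
      exact h2
  have key : (inner ℝ v (y - x) : ℝ) ≤ g y - g x := by
    have hs := hconv.le_slope_of_hasDerivAt (Set.mem_univ (0:ℝ)) (Set.mem_univ 1) one_pos hder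
    rw [slope_def_field] at hs
    have hc1 : c 1 = y := by simp [hcdef]
    have hc0 : c 0 = x := by simp [hcdef]
    rw [hc1, hc0] at hs
    simpa using hs
  linarith

/-- uniform bound on the multipliers of the proximal-point
subproblems under the Slater condition. -/
theorem stmt_17 {n m : ℕ} (hm : 0 < m)
    (f h : EuclideanSpace ℝ (Fin n) → ℝ)
    (g : Fin m → EuclideanSpace ℝ (Fin n) → ℝ)
    (gradg : Fin m → EuclideanSpace ℝ (Fin n) → EuclideanSpace ℝ (Fin n))
    (hf : ConvexOn ℝ Set.univ f) (hgc : ∀ i, ConvexOn ℝ Set.univ (g i))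
    (hgd : ∀ i x, HasGradientAt (g i) (gradg i x) x)
    (D : Set (EuclideanSpace ℝ (Fin n))) (hDconv : Convex ℝ D)
    (Dh : ℝ) (hdiam : ∀ x ∈ D, ∀ y ∈ D, dist x y ≤ Dh)
    (hh : ConvexOn ℝ D h)
    (F : EuclideanSpace ℝ (Fin n) → ℝ) (hF : ∀ x, F x = f x + h x)
    (Lf : ℝ) (hLf : 0 < Lf)
    (xbark : EuclideanSpace ℝ (Fin n)) (hxbark : xbark ∈ D)
    (Fk : EuclideanSpace ℝ (Fin n) → ℝ)
    (hFk : ∀ x, Fk x = F x + Lf * ‖x - xbark‖ ^ 2)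
    -- Slater point
    (xfeas : EuclideanSpace ℝ (Fin n)) (hxfeas : xfeas ∈ D)
    (hslater : ∀ i, g i xfeas < 0)
    -- global minimizer of the original problem
    (xstar : EuclideanSpace ℝ (Fin n)) (hxstarD : xstar ∈ D)
    (hxstarfeas : ∀ i, g i xstar ≤ 0)
    (hxstarmin : ∀ x ∈ D, (∀ i, g i x ≤ 0) → F xstar ≤ F x)
    -- KKT point of the proximal-point subproblem
    (xk1 : EuclideanSpace ℝ (Fin n)) (hxk1 : xk1 ∈ D)
    (zk1 : EuclideanSpace ℝ (Fin m)) (hzpos : ∀ i, 0 ≤ zk1 i)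
    (hfeask : ∀ i, g i xk1 ≤ 0)
    (hstat : ∃ u ∈ subdiffOn D Fk xk1, u + ∑ i, zk1 i • gradg i xk1 = 0)
    (hcomp : ∀ i, zk1 i * g i xk1 = 0) :
    ‖zk1‖ ≤ (F xfeas - F xstar + Lf * Dh ^ 2) /
      (Finset.univ.inf' (Finset.univ_nonempty_iff.mpr ⟨⟨0, hm⟩⟩)
        (fun i => -g i xfeas)) := by
  obtain ⟨u, hu, heq⟩ := hstat
  set c : ℝ := Finset.univ.inf' (Finset.univ_nonempty_iff.mpr ⟨⟨0, hm⟩⟩)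
      (fun i => -g i xfeas) with hc
  have hcpos : 0 < c := by
    rw [hc, Finset.lt_inf'_iff]
    intro i _
    linarith [hslater i]
  have hcle : ∀ i, c ≤ -g i xfeas := fun i =>
    Finset.inf'_le (fun i => -g i xfeas) (Finset.mem_univ i)
  -- subgradient inequality at xfeas
  have hsub : Fk xk1 + (inner ℝ u (xfeas - xk1) : ℝ) ≤ Fk xfeas := hu xfeas hxfeas
  -- rewrite the inner product
  have hu' : u = -∑ i, zk1 i • gradg i xk1 := eq_neg_of_add_eq_zero_left heq
  have hinner : (inner ℝ u (xfeas - xk1) : ℝ)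
      = -∑ i, zk1 i * (inner ℝ (gradg i xk1) (xfeas - xk1) : ℝ) := by
    rw [hu', inner_neg_left, sum_inner]
    congr 1
    exact Finset.sum_congr rfl fun i _ => real_inner_smul_left _ _ _
  -- gradient inequality for each constraint
  have hgi : ∀ i, zk1 i * (inner ℝ (gradg i xk1) (xfeas - xk1) : ℝ) ≤ zk1 i * g i xfeas := by
    intro i
    have h1 := grad_ineq (hgc i) (hgd i xk1) xfeas
    have h2 : (inner ℝ (gradg i xk1) (xfeas - xk1) : ℝ) ≤ g i xfeas - g i xk1 := by linarith
    calc zk1 i * (inner ℝ (gradg i xk1) (xfeas - xk1) : ℝ)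
        ≤ zk1 i * (g i xfeas - g i xk1) := mul_le_mul_of_nonneg_left h2 (hzpos i)
      _ = zk1 i * g i xfeas - zk1 i * g i xk1 := by ring
      _ = zk1 i * g i xfeas := by rw [hcomp i]; ring
  -- key bound: (∑ z) * c ≤ Fk xfeas - Fk xk1
  have hkey : (∑ i, zk1 i) * c ≤ Fk xfeas - Fk xk1 := by
    have h1 : ∑ i, zk1 i * (inner ℝ (gradg i xk1) (xfeas - xk1) : ℝ)
        ≤ ∑ i, zk1 i * g i xfeas := Finset.sum_le_sum fun i _ => hgi i
    have h2 : ∑ i, zk1 i * g i xfeas ≤ ∑ i, zk1 i * (-c) :=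
      Finset.sum_le_sum fun i _ => by
        have := hcle i
        nlinarith [hzpos i]
    have h3 : ∑ i, zk1 i * (-c) = -((∑ i, zk1 i) * c) := by
      rw [← Finset.sum_mul]; ring
    rw [hinner] at hsub
    linarith
  -- Fk xfeas ≤ F xfeas + Lf * Dh ^2
  have hFkfeas : Fk xfeas ≤ F xfeas + Lf * Dh ^ 2 := by
    rw [hFk]
    have hd : ‖xfeas - xbark‖ ≤ Dh := by
      rw [← dist_eq_norm]; exact hdiam _ hxfeas _ hxbark
    have hsq : ‖xfeas - xbark‖ ^ 2 ≤ Dh ^ 2 := pow_le_pow_left₀ (norm_nonneg _) hd 2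
    nlinarith
  -- F xstar ≤ Fk xk1
  have hFkxk1 : F xstar ≤ Fk xk1 := by
    rw [hFk]
    have h1 := hxstarmin xk1 hxk1 hfeask
    nlinarith [sq_nonneg ‖xk1 - xbark‖]
  -- norm bound ‖z‖₂ ≤ ∑ zᵢ
  have hzsum : 0 ≤ ∑ i, zk1 i := Finset.sum_nonneg fun i _ => hzpos i
  have hnorm : ‖zk1‖ ≤ ∑ i, zk1 i := by
    rw [EuclideanSpace.norm_eq]
    have h1 : ∑ i, ‖zk1 i‖ ^ 2 ≤ (∑ i, zk1 i) ^ 2 := by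
      have : ∀ i ∈ Finset.univ, ‖zk1 i‖ = zk1 i := fun i _ =>
        Real.norm_of_nonneg (hzpos i)
      rw [Finset.sum_congr rfl fun i hi => by rw [this i hi]]
      exact Finset.sum_sq_le_sq_sum_of_nonneg fun i _ => hzpos i
    calc Real.sqrt (∑ i, ‖zk1 i‖ ^ 2) ≤ Real.sqrt ((∑ i, zk1 i) ^ 2) :=
        Real.sqrt_le_sqrt h1
      _ = ∑ i, zk1 i := Real.sqrt_sq hzsum
  rw [le_div_iff₀ hcpos]
  have : ‖zk1‖ * c ≤ (∑ i, zk1 i) * c := mul_le_mul_of_nonneg_right hnorm hcpos.le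
  linarith
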